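/- Let A ∈ ℝ^{m×n}. If the set-valued mapping x ↦ Ax + ℝ^m_+ is surjective (i.e., Aℝ^n + ℝ^m_+ = ℝ^m), then H(A) = max_{y∈ℝ^m, ‖y‖≤1} min{‖x‖ : Ax ≤ y} = max{ ‖v‖* : v ∈ ℝ^m_+, ‖Aᵀ v‖* ≤ 1 } = 1 / min{ ‖Aᵀ v‖* : v ∈ ℝ^m_+, ‖v‖* = 1 }. -/

import Mathlib

open Matrix Metric

/-- `J ⊆ {1,…,m}` is `A`-surjective: `A_J ℝ^n + ℝ^J_+ = ℝ^J`. -/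
def ASurj {m n : ℕ} (A : Matrix (Fin m) (Fin n) ℝ) (J : Set (Fin m)) : Prop :=
  ∀ w : Fin m → ℝ, ∃ x : Fin n → ℝ, ∀ i ∈ J, A.mulVec x i ≤ w i

/-- `H_J(A) = max_{‖v‖ ≤ 1} min{‖x‖ : A_J x ≤ v_J}` (which is `0` for `J = ∅`). -/
noncomputable def HJ {m n : ℕ} (A : Matrix (Fin m) (Fin n) ℝ) (J : Set (Fin m)) : ℝ :=
  sSup {t | ∃ v : Fin m → ℝ, ‖v‖ ≤ 1 ∧
    t = sInf {r | ∃ x : Fin n → ℝ, (∀ i ∈ J, A.mulVec x i ≤ v i) ∧ r = ‖x‖}}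

/-- The Hoffman constant `H(A) = max_{J ∈ S(A)} H_J(A)`. -/
noncomputable def HoffA {m n : ℕ} (A : Matrix (Fin m) (Fin n) ℝ) : ℝ :=
  sSup {t | ∃ J : Set (Fin m), ASurj A J ∧ t = HJ A J}

/-- The dual norm `‖v‖* = max_{‖x‖ ≤ 1} ⟨v, x⟩`. -/
noncomputable def dualNorm {d : ℕ} (v : Fin d → ℝ) : ℝ :=
  sSup {t | ∃ x : Fin d → ℝ, ‖x‖ ≤ 1 ∧ t = ∑ i, v i * x i}

section ConeClosed

variable {E : Type*} [NormedAddCommGroup E] [NormedSpace ℝ E] [FiniteDimensional ℝ E]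
variable {κ : Type*} [Fintype κ] [DecidableEq κ]

/-- Carathéodory-type reduction for cones. -/
lemma cone_caratheodory (g : κ → E) (s : Finset κ) (c : κ → ℝ) (hc : ∀ t, 0 ≤ c t) :
    ∃ s' ⊆ s, LinearIndependent ℝ (fun i : s' => g i) ∧
      ∃ c' : κ → ℝ, (∀ t, 0 ≤ c' t) ∧ ∑ t ∈ s', c' t • g t = ∑ t ∈ s, c t • g t := by
  induction s using Finset.strongInduction generalizing c with
  | _ s ih =>
    by_cases hli : LinearIndependent ℝ (fun i : s => g i)
    · exact ⟨s, le_refl _, hli, c, hc, rfl⟩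
    · rw [Fintype.not_linearIndependent_iff] at hli
      obtain ⟨d0, hd0, i₁, hi₁⟩ := hli
      have key : ∀ d : κ → ℝ, (∑ t ∈ s, d t • g t = 0) → (∃ i ∈ s, 0 < d i) →
          ∃ s' ⊆ s, LinearIndependent ℝ (fun i : s' => g i) ∧
            ∃ c' : κ → ℝ, (∀ t, 0 ≤ c' t) ∧ ∑ t ∈ s', c' t • g t = ∑ t ∈ s, c t • g t := by
        rintro d hdsum ⟨i, his, hdi⟩
        set T := s.filter (fun t => 0 < d t) with hT
        have hiT : i ∈ T := Finset.mem_filter.2 ⟨his, hdi⟩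
        obtain ⟨i₀, hi₀T, hmin⟩ := T.exists_min_image (fun t => c t / d t) ⟨i, hiT⟩
        have hi₀s : i₀ ∈ s := (Finset.mem_filter.1 hi₀T).1
        have hdi₀ : 0 < d i₀ := (Finset.mem_filter.1 hi₀T).2
        set r := c i₀ / d i₀ with hr
        have hr0 : 0 ≤ r := div_nonneg (hc i₀) hdi₀.le
        set c' : κ → ℝ := fun t => if t ∈ s then c t - r * d t else c t with hc'
        have hc'0 : ∀ t, 0 ≤ c' t := by
          intro t
          simp only [hc']
          split_ifs with hts
          · rcases le_or_gt (d t) 0 with h | h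
            · nlinarith [hc t]
            · have h1 := hmin t (Finset.mem_filter.2 ⟨hts, h⟩)
              rw [hr, div_le_div_iff₀ hdi₀ h] at h1
              have hrdi : r * d i₀ = c i₀ := by rw [hr]; field_simp
              nlinarith [h1, hrdi, mul_pos hdi₀ h]
          · exact hc t
        have hci₀ : c' i₀ = 0 := by
          simp only [hc', if_pos hi₀s, hr]
          field_simp; ring
        have hsum : ∑ t ∈ s.erase i₀, c' t • g t = ∑ t ∈ s, c t • g t := by
          calc ∑ t ∈ s.erase i₀, c' t • g t
                = c' i₀ • g i₀ + ∑ t ∈ s.erase i₀, c' t • g t := by rw [hci₀]; simp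
              _ = ∑ t ∈ s, c' t • g t := (Finset.add_sum_erase s (fun t => c' t • g t) hi₀s)
              _ = ∑ t ∈ s, (c t • g t - r • (d t • g t)) := by
                  apply Finset.sum_congr rfl
                  intro t hts
                  simp only [hc', if_pos hts, sub_smul, smul_smul]
              _ = ∑ t ∈ s, c t • g t - r • ∑ t ∈ s, d t • g t := by
                  rw [Finset.sum_sub_distrib, Finset.smul_sum]
              _ = ∑ t ∈ s, c t • g t := by rw [hdsum, smul_zero, sub_zero]
        obtain ⟨s', hs'sub, hs'li, c'', hc''0, hc''sum⟩ :=
          ih (s.erase i₀) (Finset.erase_ssubset hi₀s) c' hc'0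
        exact ⟨s', hs'sub.trans (Finset.erase_subset _ _), hs'li, c'', hc''0,
          hc''sum.trans hsum⟩
      set d : κ → ℝ := fun t => if h : t ∈ s then d0 ⟨t, h⟩ else 0 with hd
      have hdsum : ∑ t ∈ s, d t • g t = 0 := by
        rw [← Finset.sum_attach s (fun t => d t • g t)]
        rw [← hd0]
        apply Finset.sum_congr rfl
        intro t _
        simp [hd, t.2]
      rcases lt_trichotomy (d0 i₁) 0 with h | h | h
      · have : ∑ t ∈ s, (-d) t • g t = 0 := by
          simpa [neg_smul, Finset.sum_neg_distrib] using congrArg Neg.neg hdsum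
        refine key (-d) this ⟨i₁, i₁.2, ?_⟩
        simp only [hd, Pi.neg_apply, dif_pos i₁.2]
        simpa using h
      · exact absurd h hi₁
      · refine key d hdsum ⟨i₁, i₁.2, ?_⟩
        simp only [hd, dif_pos i₁.2]
        simpa using h

lemma isClosed_coneGen (g : κ → E) :
    IsClosed {w : E | ∃ c : κ → ℝ, (∀ t, 0 ≤ c t) ∧ w = ∑ t, c t • g t} := by
  have main : {w : E | ∃ c : κ → ℝ, (∀ t, 0 ≤ c t) ∧ w = ∑ t, c t • g t} =
      ⋃ s : Finset κ, {w : E | LinearIndependent ℝ (fun i : s => g i) ∧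
        ∃ c : κ → ℝ, (∀ t, 0 ≤ c t) ∧ w = ∑ t ∈ s, c t • g t} := by
    ext w
    simp only [Set.mem_setOf_eq, Set.mem_iUnion]
    constructor
    · rintro ⟨c, hc, rfl⟩
      obtain ⟨s', _, hli, c', hc', hsum⟩ := cone_caratheodory g Finset.univ c hc
      exact ⟨s', hli, c', hc', hsum.symm⟩
    · rintro ⟨s, _, c, hc, rfl⟩
      refine ⟨fun t => if t ∈ s then c t else 0, fun t => by dsimp; split <;> simp [hc], ?_⟩
      rw [← Finset.sum_subset (Finset.subset_univ s) (fun t _ ht => by simp [ht])]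
      exact Finset.sum_congr rfl fun t ht => by simp [ht]
  rw [main]
  apply isClosed_iUnion_of_finite
  intro s
  by_cases hli : LinearIndependent ℝ (fun i : s => g i)
  · have : {w : E | LinearIndependent ℝ (fun i : s => g i) ∧
        ∃ c : κ → ℝ, (∀ t, 0 ≤ c t) ∧ w = ∑ t ∈ s, c t • g t} =
        (LinearMap.lsum ℝ (fun _ : s => ℝ) ℝ (fun i => LinearMap.toSpanSingleton ℝ E (g i))) ''
          {c : s → ℝ | ∀ i, 0 ≤ c i} := by
      ext w
      simp only [Set.mem_setOf_eq, Set.mem_image, hli, true_and]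
      constructor
      · rintro ⟨c, hc, rfl⟩
        refine ⟨fun i => c i, fun i => hc i, ?_⟩
        simp [LinearMap.lsum_apply, LinearMap.toSpanSingleton_apply]
        rw [← Finset.sum_attach s (fun t => c t • g t)]
      · rintro ⟨c, hc, rfl⟩
        refine ⟨fun t => if h : t ∈ s then c ⟨t, h⟩ else 0, ?_, ?_⟩
        · intro t; by_cases h : t ∈ s <;> simp [h, hc]
        · simp [LinearMap.lsum_apply, LinearMap.toSpanSingleton_apply]
          rw [← Finset.sum_attach s]
          apply Finset.sum_congr rfl
          intro t _
          simp [t.2]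
    rw [this]
    have hinj : Function.Injective
        (LinearMap.lsum ℝ (fun _ : s => ℝ) ℝ (fun i => LinearMap.toSpanSingleton ℝ E (g i))) := by
      rw [← LinearMap.ker_eq_bot, LinearMap.ker_eq_bot']
      intro c hc
      rw [Fintype.linearIndependent_iff] at hli
      funext i
      apply hli c
      simpa [LinearMap.lsum_apply, LinearMap.toSpanSingleton_apply] using hc
    exact ((LinearMap.lsum ℝ (fun _ : s => ℝ) ℝ
      (fun i => LinearMap.toSpanSingleton ℝ E (g i))).isClosedEmbedding_of_injective
      (LinearMap.ker_eq_bot.2 hinj)).isClosedMap _ (by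
        have hcl : {c : {x // x ∈ s} → ℝ | ∀ i, 0 ≤ c i} = ⋂ i : s, {c | 0 ≤ c i} := by
          ext c; simp [Set.mem_iInter]
        rw [hcl]
        exact isClosed_iInter fun i => isClosed_le continuous_const (continuous_apply i))
  · convert isClosed_empty
    ext w; simp [hli]

end ConeClosed

open scoped InnerProductSpace in
lemma farkas {ι N : Type*} [Fintype ι] [DecidableEq ι] [Fintype N] [DecidableEq N]
    (M : ι → N → ℝ) (b : ι → ℝ)
    (h : ¬ ∃ x : N → ℝ, ∀ i, ∑ j, M i j * x j ≤ b i) :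
    ∃ u : ι → ℝ, (∀ i, 0 ≤ u i) ∧ (∀ j, ∑ i, u i * M i j = 0) ∧ ∑ i, u i * b i < 0 := by
  classical
  let e := (WithLp.equiv 2 (ι → ℝ)).symm
  let g : (ι ⊕ N ⊕ N) → EuclideanSpace ℝ ι := fun t =>
    Sum.elim (fun i => EuclideanSpace.single i (1:ℝ))
      (Sum.elim (fun j => e (fun i => M i j)) (fun j => e (fun i => - M i j))) t
  set S : Set (EuclideanSpace ℝ ι) :=
    {w | ∃ c : (ι ⊕ N ⊕ N) → ℝ, (∀ t, 0 ≤ c t) ∧ w = ∑ t, c t • g t} with hS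
  have gval : ∀ t i, g t i = Sum.elim (fun i' => if i = i' then (1:ℝ) else 0)
      (Sum.elim (fun j => M i j) (fun j => - M i j)) t := by
    rintro (i' | j | j) i
    · simp [g, EuclideanSpace.single_apply]
    · rfl
    · rfl
  have hcomp : ∀ (c : (ι ⊕ N ⊕ N) → ℝ) (i : ι), (∑ t, c t • g t) i =
      c (Sum.inl i) + ∑ j, (c (Sum.inr (Sum.inl j)) - c (Sum.inr (Sum.inr j))) * M i j := by
    intro c i
    have h0 : (∑ t, c t • g t) i = EuclideanSpace.proj (𝕜 := ℝ) i (∑ t, c t • g t) := rfl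
    rw [h0, map_sum (EuclideanSpace.proj (𝕜 := ℝ) i) (fun t => c t • g t) Finset.univ]
    simp only [_root_.map_smul, smul_eq_mul, PiLp.proj_apply]
    simp only [gval]
    rw [Fintype.sum_sum_type, Fintype.sum_sum_type]
    simp only [Sum.elim_inl, Sum.elim_inr, mul_ite, mul_one, mul_zero]
    rw [Finset.sum_ite_eq Finset.univ i (fun i' => c (Sum.inl i'))]
    simp only [Finset.mem_univ, if_pos]
    congr 1
    rw [← Finset.sum_add_distrib]
    exact Finset.sum_congr rfl fun j _ => by ring
  -- the cone
  let K : ConvexCone ℝ (EuclideanSpace ℝ ι) :=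
    { carrier := S
      smul_mem' := by
        rintro r hr w ⟨c, hc, rfl⟩
        refine ⟨fun t => r * c t, fun t => mul_nonneg hr.le (hc t), ?_⟩
        rw [Finset.smul_sum]
        exact Finset.sum_congr rfl fun t _ => smul_smul r (c t) (g t)
      add_mem' := by
        rintro w ⟨c, hc, rfl⟩ w' ⟨c', hc', rfl⟩
        refine ⟨fun t => c t + c' t, fun t => add_nonneg (hc t) (hc' t), ?_⟩
        rw [← Finset.sum_add_distrib]
        exact Finset.sum_congr rfl fun t _ => (add_smul (c t) (c' t) (g t)).symm }
  have hKne : (K : Set (EuclideanSpace ℝ ι)).Nonempty :=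
    ⟨0, ⟨fun _ => 0, fun t => le_refl 0, by simp⟩⟩
  have hKcl : IsClosed (K : Set (EuclideanSpace ℝ ι)) := isClosed_coneGen g
  have hbK : e b ∉ K := by
    rintro ⟨c, hc, hcb⟩
    apply h
    refine ⟨fun j => c (Sum.inr (Sum.inl j)) - c (Sum.inr (Sum.inr j)), fun i => ?_⟩
    have := congrArg (fun w : EuclideanSpace ℝ ι => w i) hcb
    simp only at this
    rw [hcomp c i] at this
    have hbi : e b i = b i := rfl
    rw [hbi] at this
    have h0 : ∀ j, (c (Sum.inr (Sum.inl j)) - c (Sum.inr (Sum.inr j))) * M i j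
        = M i j * (c (Sum.inr (Sum.inl j)) - c (Sum.inr (Sum.inr j))) := fun j => mul_comm _ _
    rw [Finset.sum_congr rfl (fun j _ => h0 j)] at this
    linarith [hc (Sum.inl i)]
  obtain ⟨y, hy1, hy2'⟩ := ProperCone.hyperplane_separation' (E := EuclideanSpace ℝ ι) (x₀ := e b)
    ({ carrier := (K : Set (EuclideanSpace ℝ ι))
       add_mem' := fun ha hb => K.add_mem ha hb
       zero_mem' := ⟨fun _ => 0, fun t => le_refl 0, by simp⟩
       smul_mem' := by
         rintro c x ⟨d, hd, rfl⟩
         refine ⟨fun t => c.1 * d t, fun t => mul_nonneg c.2 (hd t), ?_⟩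
         change (c.1 : ℝ) • (∑ t, d t • g t) = _
         rw [Finset.smul_sum]
         exact Finset.sum_congr rfl fun t _ => smul_smul _ _ _
       isClosed' := hKcl } : ProperCone ℝ (EuclideanSpace ℝ ι)) hbK
  have hy2 : ⟪y, e b⟫_ℝ < 0 := by rwa [real_inner_comm]
  have hgK : ∀ t, g t ∈ K := by
    intro t
    refine ⟨fun t' => if t' = t then 1 else 0, fun t' => by positivity, ?_⟩
    rw [show (∑ t' : ι ⊕ N ⊕ N, (if t' = t then (1:ℝ) else 0) • g t')
        = ∑ t' : ι ⊕ N ⊕ N, (if t' = t then g t' else 0) from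
      Finset.sum_congr rfl fun t' _ => by split <;> simp]
    simp
  have hinner : ∀ t, 0 ≤ ∑ i, g t i * y i := by
    intro t
    have := hy1 (g t) (hgK t)
    rw [PiLp.inner_apply] at this
    simpa [mul_comm] using this
  refine ⟨fun i => y i, ?_, ?_, ?_⟩
  · intro i
    have := hinner (Sum.inl i)
    simp only [gval] at this
    simpa using this
  · intro j
    have h1 := hinner (Sum.inr (Sum.inl j))
    have h2 := hinner (Sum.inr (Sum.inr j))
    simp only [gval] at h1 h2
    simp only [Sum.elim_inr, Sum.elim_inl, neg_mul, Finset.sum_neg_distrib] at h1 h2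
    have : ∑ i, M i j * y i = 0 := le_antisymm (by linarith) h1
    rw [← this]
    exact Finset.sum_congr rfl fun i _ => mul_comm _ _
  · rw [PiLp.inner_apply] at hy2
    simpa [e, mul_comm] using hy2



lemma dualNorm_eq {d : ℕ} (v : Fin d → ℝ) : dualNorm v = ∑ i, |v i| := by
  apply IsGreatest.csSup_eq
  constructor
  · refine ⟨fun i => Real.sign (v i), ?_, ?_⟩
    · rcases Nat.eq_zero_or_pos d with hd | hd
      · subst hd
        have h0 : (fun i : Fin 0 => Real.sign (v i)) = 0 := Subsingleton.elim _ _
        rw [h0, norm_zero]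
        exact zero_le_one
      · rw [pi_norm_le_iff_of_nonneg zero_le_one]
        intro i
        rw [Real.norm_eq_abs]
        rcases lt_trichotomy (v i) 0 with h | h | h
        · rw [Real.sign_of_neg h]; simp
        · rw [h, Real.sign_zero]; simp
        · rw [Real.sign_of_pos h]; simp
    · apply Finset.sum_congr rfl
      intro i _
      show |v i| = v i * Real.sign (v i)
      rcases lt_trichotomy (v i) 0 with h | h | h
      · rw [Real.sign_of_neg h, abs_of_neg h]; ring
      · rw [h, Real.sign_zero]; simp
      · rw [Real.sign_of_pos h, abs_of_pos h]; ring
  · rintro t ⟨x, hx, rfl⟩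
    calc ∑ i, v i * x i ≤ ∑ i, |v i| * 1 := by
          apply Finset.sum_le_sum
          intro i _
          calc v i * x i ≤ |v i * x i| := le_abs_self _
            _ = |v i| * |x i| := abs_mul _ _
            _ ≤ |v i| * 1 := by
                apply mul_le_mul_of_nonneg_left _ (abs_nonneg _)
                calc |x i| = ‖x i‖ := (Real.norm_eq_abs _).symm
                  _ ≤ ‖x‖ := norm_le_pi_norm x i
                  _ ≤ 1 := hx
      _ = ∑ i, |v i| := by simp

lemma dualNorm_nonneg_eq {d : ℕ} (v : Fin d → ℝ) (hv : ∀ i, 0 ≤ v i) :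
    dualNorm v = ∑ i, v i := by
  rw [dualNorm_eq]
  exact Finset.sum_congr rfl fun i _ => abs_of_nonneg (hv i)

lemma transpose_mulVec_apply {m n : ℕ} (A : Matrix (Fin m) (Fin n) ℝ) (v : Fin m → ℝ)
    (j : Fin n) : A.transpose.mulVec v j = ∑ i, A i j * v i := by
  simp [Matrix.mulVec, dotProduct, Matrix.transpose_apply]

/-- key exchange identity -/
lemma vdotAx {m n : ℕ} (A : Matrix (Fin m) (Fin n) ℝ) (v : Fin m → ℝ) (x : Fin n → ℝ) :
    ∑ i, v i * A.mulVec x i = ∑ j, A.transpose.mulVec v j * x j := by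
  simp only [Matrix.mulVec, dotProduct, Matrix.transpose_apply]
  simp only [Finset.mul_sum, Finset.sum_mul]
  rw [Finset.sum_comm]
  apply Finset.sum_congr rfl
  intro j _
  apply Finset.sum_congr rfl
  intro i _
  ring


section Main

variable {m n : ℕ} (A : Matrix (Fin m) (Fin n) ℝ)

/-- the inner feasibility-norm set for constraint set J and rhs v -/
def FeasJ (J : Set (Fin m)) (v : Fin m → ℝ) : Set ℝ :=
  {r | ∃ x : Fin n → ℝ, (∀ i ∈ J, A.mulVec x i ≤ v i) ∧ r = ‖x‖}


/-- Proposition 2, surjective case: if `x ↦ Ax + ℝ^m_+` is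
surjective, i.e. `Aℝ^n + ℝ^m_+ = ℝ^m`, then
`H(A) = max_{‖y‖≤1} min{‖x‖ : Ax ≤ y} = max{‖v‖* : v ≥ 0, ‖Aᵀv‖* ≤ 1}
      = 1 / min{‖Aᵀv‖* : v ≥ 0, ‖v‖* = 1}`. -/
theorem hoffman_surjective {m n : ℕ} (A : Matrix (Fin m) (Fin n) ℝ)
    (hs : ∀ w : Fin m → ℝ, ∃ x : Fin n → ℝ, ∃ s : Fin m → ℝ,
      (∀ i, 0 ≤ s i) ∧ A.mulVec x + s = w) :
    HoffA A = sSup {t | ∃ y : Fin m → ℝ, ‖y‖ ≤ 1 ∧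
        t = sInf {r | ∃ x : Fin n → ℝ, (∀ i, A.mulVec x i ≤ y i) ∧ r = ‖x‖}} ∧
    HoffA A = sSup {t | ∃ v : Fin m → ℝ, (∀ i, 0 ≤ v i) ∧
        dualNorm (A.transpose.mulVec v) ≤ 1 ∧ t = dualNorm v} ∧
    HoffA A = 1 / sInf {t | ∃ v : Fin m → ℝ, (∀ i, 0 ≤ v i) ∧
        dualNorm v = 1 ∧ t = dualNorm (A.transpose.mulVec v)} := by
  classical
  -- a point x₀ with A x₀ ≤ -1
  obtain ⟨x₀, s₀, hs₀, hxs₀⟩ := hs (fun _ => -1)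
  have hx₀ : ∀ i, A.mulVec x₀ i ≤ -1 := by
    intro i
    have := congrFun hxs₀ i
    simp only [Pi.add_apply] at this
    linarith [hs₀ i]
  set neg1 : Fin m → ℝ := fun _ => -1 with hneg1
  have hneg1norm : ‖neg1‖ ≤ 1 := by
    rcases Nat.eq_zero_or_pos m with hm | hm
    · subst hm
      have h0 : neg1 = 0 := Subsingleton.elim _ _
      rw [h0, norm_zero]; exact zero_le_one
    · rw [pi_norm_le_iff_of_nonneg zero_le_one]
      intro i
      simp [hneg1]
  -- basic facts about FeasJ
  have hFeas_lb : ∀ (J : Set (Fin m)) (v : Fin m → ℝ), ∀ r ∈ FeasJ A J v, (0:ℝ) ≤ r := by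
    rintro J v r ⟨x, _, rfl⟩; exact norm_nonneg x
  have hFeas_bdd : ∀ (J : Set (Fin m)) (v : Fin m → ℝ), BddBelow (FeasJ A J v) :=
    fun J v => ⟨0, hFeas_lb J v⟩
  have hx₀mem : ∀ (J : Set (Fin m)) (v : Fin m → ℝ), ‖v‖ ≤ 1 → ‖x₀‖ ∈ FeasJ A J v := by
    intro J v hv
    refine ⟨x₀, fun i _ => ?_, rfl⟩
    have : |v i| ≤ 1 := by
      calc |v i| = ‖v i‖ := (Real.norm_eq_abs _).symm
        _ ≤ ‖v‖ := norm_le_pi_norm v i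
        _ ≤ 1 := hv
    have := abs_le.1 this
    linarith [hx₀ i]
  have hInf_le : ∀ (J : Set (Fin m)) (v : Fin m → ℝ), ‖v‖ ≤ 1 →
      sInf (FeasJ A J v) ≤ ‖x₀‖ :=
    fun J v hv => csInf_le (hFeas_bdd J v) (hx₀mem J v hv)
  have hHJdef : ∀ J : Set (Fin m),
      HJ A J = sSup {t | ∃ v : Fin m → ℝ, ‖v‖ ≤ 1 ∧ t = sInf (FeasJ A J v)} := fun J => rfl
  have hHJ_le : ∀ J : Set (Fin m), HJ A J ≤ ‖x₀‖ := by
    intro J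
    rw [hHJdef]
    apply csSup_le
    · exact ⟨sInf (FeasJ A J 0), 0, by simp, rfl⟩
    · rintro t ⟨v, hv, rfl⟩
      exact hInf_le J v hv
  have hHJset_bdd : ∀ J : Set (Fin m),
      BddAbove {t | ∃ v : Fin m → ℝ, ‖v‖ ≤ 1 ∧ t = sInf (FeasJ A J v)} := by
    intro J
    refine ⟨‖x₀‖, ?_⟩
    rintro t ⟨v, hv, rfl⟩
    exact hInf_le J v hv
  -- HJ is monotone: each HJ A J ≤ HJ A univ
  have hHJ_mono : ∀ J : Set (Fin m), HJ A J ≤ HJ A Set.univ := by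
    intro J
    rw [hHJdef]
    apply csSup_le
    · exact ⟨sInf (FeasJ A J 0), 0, by simp, rfl⟩
    rintro t ⟨v, hv, rfl⟩
    have h1 : sInf (FeasJ A J v) ≤ sInf (FeasJ A Set.univ v) := by
      apply csInf_le_csInf (hFeas_bdd J v) ⟨‖x₀‖, hx₀mem Set.univ v hv⟩
      rintro r ⟨x, hxf, rfl⟩
      exact ⟨x, fun i hi => hxf i (Set.mem_univ i), rfl⟩
    rw [hHJdef]
    refine h1.trans (le_csSup (hHJset_bdd Set.univ) ⟨v, hv, rfl⟩)
  -- equality 1 : HoffA A = HJ A univ = sSup S₁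
  have hASurj : ∀ J : Set (Fin m), ASurj A J := by
    intro J w
    obtain ⟨x, s, hsnn, hxsw⟩ := hs w
    refine ⟨x, fun i _ => ?_⟩
    have := congrFun hxsw i
    simp only [Pi.add_apply] at this
    linarith [hsnn i]
  have hHoffdef : HoffA A = sSup {t | ∃ J : Set (Fin m), ASurj A J ∧ t = HJ A J} := rfl
  have hHoff : HoffA A = HJ A Set.univ := by
    rw [hHoffdef]
    apply le_antisymm
    · apply csSup_le
      · exact ⟨HJ A Set.univ, Set.univ, hASurj _, rfl⟩
      rintro t ⟨J, _, rfl⟩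
      exact hHJ_mono J
    · have hbdd : BddAbove {t | ∃ J : Set (Fin m), ASurj A J ∧ t = HJ A J} := by
        refine ⟨‖x₀‖, ?_⟩
        rintro t ⟨J, _, rfl⟩
        exact hHJ_le J
      exact le_csSup hbdd ⟨Set.univ, hASurj _, rfl⟩
  -- α and its characterization as sSup S₁
  set α := sInf (FeasJ A Set.univ neg1) with hα
  have hαnn : 0 ≤ α := le_csInf ⟨‖x₀‖, hx₀mem _ _ hneg1norm⟩ (hFeas_lb _ _)
  have hS₁ : HJ A Set.univ = α := by
    rw [hHJdef]
    apply IsGreatest.csSup_eq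
    constructor
    · exact ⟨neg1, hneg1norm, rfl⟩
    · rintro t ⟨v, hv, rfl⟩
      apply csInf_le_csInf (hFeas_bdd Set.univ v) ⟨‖x₀‖, hx₀mem Set.univ neg1 hneg1norm⟩
      rintro r ⟨x, hxf, rfl⟩
      refine ⟨x, fun i _ => ?_, rfl⟩
      have h1 : |v i| ≤ 1 := by
        calc |v i| = ‖v i‖ := (Real.norm_eq_abs _).symm
          _ ≤ ‖v‖ := norm_le_pi_norm v i
          _ ≤ 1 := hv
      have := abs_le.1 h1
      have := hxf i (Set.mem_univ i)
      simp only [hneg1] at this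
      linarith
  -- kernel lemma from surjectivity
  have hker : ∀ v : Fin m → ℝ, (∀ i, 0 ≤ v i) → A.transpose.mulVec v = 0 → ∑ i, v i ≤ 0 := by
    intro v hv hAv
    have h0 : ∑ i, v i * A.mulVec x₀ i = 0 := by
      rw [vdotAx, ]
      apply Finset.sum_eq_zero
      intro j _
      rw [congrFun hAv j]
      simp
    have h1 : ∑ i, v i ≤ ∑ i, -(v i * A.mulVec x₀ i) := by
      apply Finset.sum_le_sum
      intro i _
      nlinarith [hv i, hx₀ i]
    rw [Finset.sum_neg_distrib, h0] at h1
    linarith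
  -- the dual feasible set D
  set D := {t | ∃ v : Fin m → ℝ, (∀ i, 0 ≤ v i) ∧
      dualNorm (A.transpose.mulVec v) ≤ 1 ∧ t = dualNorm v} with hD
  have hD0 : (0:ℝ) ∈ D := by
    refine ⟨0, fun i => le_refl 0, ?_, ?_⟩
    · rw [Matrix.mulVec_zero, dualNorm_eq]; simp
    · rw [dualNorm_eq]; simp
  have hweak : ∀ t ∈ D, t ≤ α := by
    rintro t ⟨v, hv, hAv, rfl⟩
    rw [dualNorm_nonneg_eq v hv]
    apply le_csInf ⟨‖x₀‖, hx₀mem _ _ hneg1norm⟩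
    rintro r ⟨x, hxf, rfl⟩
    rw [dualNorm_eq] at hAv
    have h1 : ∑ i, v i ≤ ∑ i, v i * (-(A.mulVec x i)) := by
      apply Finset.sum_le_sum; intro i _
      have := hxf i (Set.mem_univ i)
      simp only [hneg1] at this
      nlinarith [hv i]
    have h2 : ∑ i, v i * (-(A.mulVec x i)) = -∑ j, A.transpose.mulVec v j * x j := by
      rw [← vdotAx, ← Finset.sum_neg_distrib]
      exact Finset.sum_congr rfl fun i _ => by ring
    have h3 : -∑ j, A.transpose.mulVec v j * x j ≤ ∑ j, |A.transpose.mulVec v j| * ‖x‖ := by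
      rw [← Finset.sum_neg_distrib]
      apply Finset.sum_le_sum
      intro j _
      have hxj : |x j| ≤ ‖x‖ := by
        calc |x j| = ‖x j‖ := (Real.norm_eq_abs _).symm
          _ ≤ ‖x‖ := norm_le_pi_norm x j
      calc -(A.transpose.mulVec v j * x j) ≤ |A.transpose.mulVec v j * x j| := neg_le_abs _
        _ = |A.transpose.mulVec v j| * |x j| := abs_mul _ _
        _ ≤ |A.transpose.mulVec v j| * ‖x‖ := by
            exact mul_le_mul_of_nonneg_left hxj (abs_nonneg _)
    have h4 : ∑ j, |A.transpose.mulVec v j| * ‖x‖ ≤ ‖x‖ := by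
      rw [← Finset.sum_mul]
      nlinarith [norm_nonneg x]
    linarith
  have hDbdd : BddAbove D := ⟨α, hweak⟩
  have hstrong : α ≤ sSup D := by
    by_contra hcon
    push_neg at hcon
    set γ := sSup D with hγ
    have hγ0 : 0 ≤ γ := le_csSup hDbdd hD0
    set Mrow : (Fin m ⊕ Fin n ⊕ Fin n) → Fin n → ℝ :=
      Sum.elim (fun i j => A i j)
        (Sum.elim (fun j' j => if j = j' then 1 else 0)
          (fun j' j => if j = j' then -1 else 0)) with hMrow
    set brow : (Fin m ⊕ Fin n ⊕ Fin n) → ℝ :=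
      Sum.elim (fun _ => -1) (Sum.elim (fun _ => γ) (fun _ => γ)) with hbrow
    have hinf : ¬ ∃ x : Fin n → ℝ, ∀ i, ∑ j, Mrow i j * x j ≤ brow i := by
      rintro ⟨x, hx⟩
      have hfeas : ∀ i, A.mulVec x i ≤ neg1 i := by
        intro i
        have := hx (Sum.inl i)
        simpa [hMrow, hbrow, Matrix.mulVec, dotProduct, hneg1] using this
      have hxb : ∀ j, |x j| ≤ γ := by
        intro j
        have h1 := hx (Sum.inr (Sum.inl j))
        have h2 := hx (Sum.inr (Sum.inr j))
        simp only [hMrow, hbrow, Sum.elim_inr, Sum.elim_inl, ite_mul, one_mul, zero_mul,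
          neg_mul, neg_one_mul] at h1 h2
        rw [Finset.sum_ite_eq' Finset.univ j x] at h1
        rw [show (∑ j' : Fin n, if j' = j then -x j' else 0) = -x j from by
          rw [Finset.sum_ite_eq' Finset.univ j (fun j' => -x j')]; simp] at h2
        simp only [Finset.mem_univ, if_pos] at h1 h2
        rw [abs_le]; constructor <;> linarith
      have hxn : ‖x‖ ≤ γ := by
        rw [pi_norm_le_iff_of_nonneg hγ0]
        intro j
        rw [Real.norm_eq_abs]
        exact hxb j
      have : α ≤ ‖x‖ := csInf_le (hFeas_bdd _ _) ⟨x, fun i _ => hfeas i, rfl⟩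
      linarith
    obtain ⟨u, hu0, hucol, hub⟩ := farkas Mrow brow hinf
    set v : Fin m → ℝ := fun i => u (Sum.inl i) with hv
    set p : Fin n → ℝ := fun j => u (Sum.inr (Sum.inl j)) with hp
    set q : Fin n → ℝ := fun j => u (Sum.inr (Sum.inr j)) with hq
    have hAtv : ∀ j, A.transpose.mulVec v j = q j - p j := by
      intro j
      have := hucol j
      rw [Fintype.sum_sum_type, Fintype.sum_sum_type] at this
      simp only [hMrow, Sum.elim_inl, Sum.elim_inr, mul_ite, mul_one, mul_zero, mul_neg] at this
      rw [Finset.sum_ite_eq Finset.univ j (fun j' => u (Sum.inr (Sum.inl j')))] at this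
      rw [show (∑ j' : Fin n, if j = j' then -u (Sum.inr (Sum.inr j')) else 0)
          = -u (Sum.inr (Sum.inr j)) from by
        rw [Finset.sum_ite_eq Finset.univ j (fun j' => -u (Sum.inr (Sum.inr j')))]; simp] at this
      simp only [Finset.mem_univ, if_pos] at this
      rw [transpose_mulVec_apply]
      have : ∑ i, v i * A i j + (p j - q j) = 0 := by
        rw [← this]; ring_nf; simp only [hv, hp, hq]
      have h5 : ∑ i, A i j * v i = ∑ i, v i * A i j :=
        Finset.sum_congr rfl fun i _ => mul_comm _ _
      rw [h5]; linarith
    have hbsum : -(∑ i, v i) + γ * (∑ j, p j + ∑ j, q j) < 0 := by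
      rw [Fintype.sum_sum_type, Fintype.sum_sum_type] at hub
      simp only [hbrow, Sum.elim_inl, Sum.elim_inr, mul_neg, mul_one] at hub
      rw [show (∑ x : Fin m, -u (Sum.inl x)) = -∑ i : Fin m, v i from by
        rw [← Finset.sum_neg_distrib]] at hub
      rw [show (∑ x : Fin n, u (Sum.inr (Sum.inl x)) * γ) = γ * ∑ j : Fin n, p j from by
        rw [Finset.mul_sum]; exact Finset.sum_congr rfl fun j _ => mul_comm _ _] at hub
      rw [show (∑ x : Fin n, u (Sum.inr (Sum.inr x)) * γ) = γ * ∑ j : Fin n, q j from by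
        rw [Finset.mul_sum]; exact Finset.sum_congr rfl fun j _ => mul_comm _ _] at hub
      linarith
    set c := ∑ j, |q j - p j| with hc
    have hcle : c ≤ ∑ j, (p j + q j) := by
      apply Finset.sum_le_sum
      intro j _
      have := abs_sub (q j) (p j)
      rw [abs_of_nonneg (hu0 _), abs_of_nonneg (hu0 _)] at this
      linarith
    have hsplit : ∑ j, (p j + q j) = ∑ j, p j + ∑ j, q j := Finset.sum_add_distrib
    have hγc : γ * c < ∑ i, v i := by
      nlinarith
    rcases eq_or_lt_of_le (show 0 ≤ c from Finset.sum_nonneg fun j _ => abs_nonneg _) with hc0 | hc0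
    · -- c = 0 : contradiction with surjectivity
      have hAv0 : A.transpose.mulVec v = 0 := by
        funext j
        have h6 : ∀ j' ∈ Finset.univ, (0:ℝ) ≤ |q j' - p j'| := fun j' _ => abs_nonneg _
        have := (Finset.sum_eq_zero_iff_of_nonneg h6).1 hc0.symm j (Finset.mem_univ j)
        rw [abs_eq_zero] at this
        rw [hAtv j, this]; rfl
      have := hker v (fun i => hu0 _) hAv0
      rw [← hc0] at hγc
      simp at hγc
      linarith
    · -- c > 0 : scale to get a dual feasible point beating γ
      set w : Fin m → ℝ := fun i => v i / c with hw
      have hw0 : ∀ i, 0 ≤ w i := fun i => div_nonneg (hu0 _) hc0.le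
      have hAtw : ∀ j, A.transpose.mulVec w j = (q j - p j) / c := by
        intro j
        have : w = c⁻¹ • v := by funext i; simp [hw, div_eq_inv_mul]
        rw [this, Matrix.mulVec_smul]
        simp [hAtv j, div_eq_inv_mul]
      have hdn : dualNorm (A.transpose.mulVec w) ≤ 1 := by
        rw [dualNorm_eq]
        have : ∀ j, |A.transpose.mulVec w j| = |q j - p j| / c := by
          intro j
          rw [hAtw j, abs_div, abs_of_pos hc0]
        rw [Finset.sum_congr rfl fun j _ => this j, ← Finset.sum_div, ← hc]
        rw [div_self (ne_of_gt hc0)]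
      have hmem : dualNorm w ∈ D := ⟨w, hw0, hdn, rfl⟩
      have hle : dualNorm w ≤ γ := le_csSup hDbdd hmem
      have : γ < dualNorm w := by
        rw [dualNorm_nonneg_eq w hw0]
        rw [show ∑ i, w i = (∑ i, v i) / c from by rw [← Finset.sum_div]]
        rw [lt_div_iff₀ hc0]
        linarith
      linarith
  have hαD : α = sSup D := le_antisymm hstrong (csSup_le ⟨0, hD0⟩ hweak)
  set T := {t | ∃ v : Fin m → ℝ, (∀ i, 0 ≤ v i) ∧
      dualNorm v = 1 ∧ t = dualNorm (A.transpose.mulVec v)} with hTdef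
  refine ⟨?_, ?_, ?_⟩
  · -- equality 1
    rw [hHoff, hHJdef]
    congr 1
    ext t
    constructor
    · rintro ⟨v, hv, rfl⟩
      refine ⟨v, hv, ?_⟩
      congr 1
      ext r
      constructor
      · rintro ⟨x, hx, rfl⟩; exact ⟨x, fun i => hx i (Set.mem_univ i), rfl⟩
      · rintro ⟨x, hx, rfl⟩; exact ⟨x, fun i hi => hx i, rfl⟩
    · rintro ⟨v, hv, rfl⟩
      refine ⟨v, hv, ?_⟩
      congr 1
      ext r
      constructor
      · rintro ⟨x, hx, rfl⟩; exact ⟨x, fun i hi => hx i, rfl⟩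
      · rintro ⟨x, hx, rfl⟩; exact ⟨x, fun i => hx i (Set.mem_univ i), rfl⟩
  · -- equality 2
    exact hHoff.trans (hS₁.trans hαD)
  · -- equality 3
    rcases Nat.eq_zero_or_pos m with hm | hm
    · subst hm
      have hTempty : T = ∅ := by
        ext t
        simp only [hTdef, Set.mem_empty_iff_false, iff_false, Set.mem_setOf_eq]
        rintro ⟨v, hv, hdn, rfl⟩
        rw [dualNorm_eq] at hdn
        simp at hdn
      rw [hTempty, Real.sInf_empty, div_zero, hHoff, hS₁]
      apply le_antisymm _ hαnn
      apply csInf_le (hFeas_bdd _ _)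
      exact ⟨0, fun i _ => i.elim0, norm_zero.symm⟩
    · -- m positive
      set Vset : Set (Fin m → ℝ) := {v | (∀ i, 0 ≤ v i) ∧ ∑ i, v i = 1} with hVset
      set φ : (Fin m → ℝ) → ℝ := fun v => ∑ j, |A.transpose.mulVec v j| with hφ
      have hφcont : Continuous φ := by
        apply continuous_finset_sum
        intro j _
        apply Continuous.abs
        have h7 : (fun v : Fin m → ℝ => A.transpose.mulVec v j)
            = fun v => ∑ i, A i j * v i := by
          funext v; exact transpose_mulVec_apply A v j
        rw [h7]
        exact continuous_finset_sum _ fun i _ => continuous_const.mul (continuous_apply i)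
      have hVclosed : IsClosed Vset := by
        have : Vset = (⋂ i, {v : Fin m → ℝ | 0 ≤ v i}) ∩ {v | ∑ i, v i = 1} := by
          ext v; simp [hVset, Set.mem_iInter]
        rw [this]
        exact (isClosed_iInter fun i =>
          isClosed_le continuous_const (continuous_apply i)).inter
          (isClosed_eq (continuous_finset_sum _ fun i _ => continuous_apply i) continuous_const)
      have hVsub : Vset ⊆ Metric.closedBall 0 1 := by
        rintro v ⟨hv1, hv2⟩
        rw [Metric.mem_closedBall, dist_zero_right]
        rw [pi_norm_le_iff_of_nonneg zero_le_one]
        intro i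
        rw [Real.norm_eq_abs, abs_of_nonneg (hv1 i)]
        rw [← hv2]
        exact Finset.single_le_sum (fun i _ => hv1 i) (Finset.mem_univ i)
      have hVcompact : IsCompact Vset :=
        (isCompact_closedBall (0 : Fin m → ℝ) 1).of_isClosed_subset hVclosed hVsub
      set i₀ : Fin m := ⟨0, hm⟩ with hi₀
      have he₀ : (fun i => if i = i₀ then (1:ℝ) else 0) ∈ Vset := by
        constructor
        · intro i; dsimp only; split <;> norm_num
        · rw [Finset.sum_ite_eq' Finset.univ i₀ (fun _ => (1:ℝ))]
          simp
      obtain ⟨vs, hvs, hminOn⟩ := hVcompact.exists_isMinOn ⟨_, he₀⟩ hφcont.continuousOn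
      set β := φ vs with hβ
      have hTeq : T = φ '' Vset := by
        ext t
        constructor
        · rintro ⟨v, hv, hdn, rfl⟩
          rw [dualNorm_nonneg_eq v hv] at hdn
          exact ⟨v, ⟨hv, hdn⟩, (dualNorm_eq _).symm⟩
        · rintro ⟨v, ⟨hv1, hv2⟩, rfl⟩
          exact ⟨v, hv1, by rw [dualNorm_nonneg_eq v hv1]; exact hv2, (dualNorm_eq _).symm⟩
      have hβinf : sInf T = β := by
        rw [hTeq]
        apply IsLeast.csInf_eq
        constructor
        · exact ⟨vs, hvs, rfl⟩
        · rintro t ⟨v, hv, rfl⟩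
          exact hminOn hv
      have hβ0 : 0 ≤ β := Finset.sum_nonneg fun j _ => abs_nonneg _
      have hβpos : 0 < β := by
        rcases eq_or_lt_of_le hβ0 with h | h
        · exfalso
          have hAvs : A.transpose.mulVec vs = 0 := by
            funext j
            have h6 : ∀ j' ∈ Finset.univ, (0:ℝ) ≤ |A.transpose.mulVec vs j'| :=
              fun j' _ => abs_nonneg _
            have := (Finset.sum_eq_zero_iff_of_nonneg h6).1 h.symm j (Finset.mem_univ j)
            rw [abs_eq_zero] at this
            rw [this]; rfl
          have := hker vs hvs.1 hAvs
          rw [hvs.2] at this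
          linarith
        · exact h
      have hsmul : ∀ (r : ℝ) (v : Fin m → ℝ) (j : Fin n),
          A.transpose.mulVec (fun i => v i / r) j = A.transpose.mulVec v j / r := by
        intro r v j
        have : (fun i => v i / r) = r⁻¹ • v := by
          funext i; simp [div_eq_inv_mul]
        rw [this, Matrix.mulVec_smul]
        simp [div_eq_inv_mul]
      have hD1 : sSup D ≤ 1/β := by
        apply csSup_le ⟨0, hD0⟩
        rintro t ⟨v, hv, hAv, rfl⟩
        rw [dualNorm_nonneg_eq v hv]
        rw [dualNorm_eq] at hAv
        rcases eq_or_lt_of_le (Finset.sum_nonneg fun i _ => hv i :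
            (0:ℝ) ≤ ∑ i, v i) with hσ | hσ
        · rw [← hσ]
          positivity
        · have hmem : (fun i => v i / (∑ i, v i)) ∈ Vset := by
            constructor
            · intro i; exact div_nonneg (hv i) hσ.le
            · rw [← Finset.sum_div, div_self (ne_of_gt hσ)]
          have h8 : β ≤ φ (fun i => v i / (∑ i, v i)) := hminOn hmem
          have h9 : φ (fun i => v i / (∑ i, v i)) = (∑ j, |A.transpose.mulVec v j|) / (∑ i, v i) := by
            rw [hφ]
            simp only
            rw [show (∑ j, |A.transpose.mulVec (fun i => v i / (∑ i, v i)) j|)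
                = ∑ j, |A.transpose.mulVec v j| / (∑ i, v i) from
              Finset.sum_congr rfl fun j _ => by rw [hsmul, abs_div, abs_of_pos hσ]]
            rw [← Finset.sum_div]
          rw [h9] at h8
          rw [le_div_iff₀ hβpos]
          have := (le_div_iff₀ hσ).1 h8
          nlinarith
      have hD2 : 1/β ≤ sSup D := by
        apply le_csSup hDbdd
        refine ⟨fun i => vs i / β, fun i => div_nonneg (hvs.1 i) hβ0, ?_, ?_⟩
        · rw [dualNorm_eq]
          have h9 : ∀ j, |A.transpose.mulVec (fun i => vs i / β) j|
              = |A.transpose.mulVec vs j| / β := by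
            intro j; rw [hsmul, abs_div, abs_of_pos hβpos]
          rw [Finset.sum_congr rfl fun j _ => h9 j, ← Finset.sum_div]
          rw [show (∑ j, |A.transpose.mulVec vs j|) = β from rfl]
          rw [div_self (ne_of_gt hβpos)]
        · rw [dualNorm_nonneg_eq _ (fun i => div_nonneg (hvs.1 i) hβ0)]
          rw [← Finset.sum_div, hvs.2]
      rw [hHoff, hS₁, hαD, hβinf]
      exact le_antisymm hD1 hD2


end Main
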